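/- Let S be a simplicial complex in a real vector space E (in the sense of Mathlib's Geometry.SimplicialComplex over ℝ) whose set of faces is finite and nonempty. Then there exists a family of continuous functions w_σ : S.space → [0,1], indexed by the faces σ of S, such that: (i) for every face σ, the support of w_σ (the closure in S.space of {x : w_σ(x) ≠ 0}) is contained in Star(σ) := ⋃ {intrinsicInterior ℝ (convexHull ℝ τ) : τ a face of S with σ ⊆ τ}; (ii) for any two distinct faces σ, σ' with the same cardinality, the supports of w_σ and w_{σ'} are disjoint; (iii) the sets w_σ^{-1}({1}), as σ ranges over all faces, cover S.space. -/

import Mathlib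

open Finset Set

namespace Stmt17Aux

theorem continuous_finset_inf' {X ι : Type*} [TopologicalSpace X] {s : Finset ι}
    (hs : s.Nonempty) {f : ι → X → ℝ} (hf : ∀ i, Continuous (f i)) :
    Continuous fun x => s.inf' hs fun i => f i x := by
  induction hs using Finset.Nonempty.cons_induction with
  | singleton a => simpa using hf a
  | cons a s ha hs ih =>
    have heq : (fun x => (Finset.cons a s ha).inf' (Finset.cons_nonempty ha) fun i => f i x)
        = fun x => min (f a x) (s.inf' hs fun i => f i x) := by
      funext x
      rw [Finset.inf'_cons (H := hs)]
    rw [heq]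
    exact (hf a).min ih

theorem continuous_finset_sup' {X ι : Type*} [TopologicalSpace X] {s : Finset ι}
    (hs : s.Nonempty) {f : ι → X → ℝ} (hf : ∀ i, Continuous (f i)) :
    Continuous fun x => s.sup' hs fun i => f i x := by
  induction hs using Finset.Nonempty.cons_induction with
  | singleton a => simpa using hf a
  | cons a s ha hs ih =>
    have heq : (fun x => (Finset.cons a s ha).sup' (Finset.cons_nonempty ha) fun i => f i x)
        = fun x => max (f a x) (s.sup' hs fun i => f i x) := by
      funext x
      rw [Finset.sup'_cons (H := hs)]
    rw [heq]
    exact (hf a).max ih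

variable {E : Type*} [NormedAddCommGroup E] [NormedSpace ℝ E]

/-- Uniqueness of convex-combination weights w.r.t. an affinely independent finset. -/
theorem eq_of_rep {τ : Finset E} (hind : AffineIndependent ℝ ((↑) : τ → E)) {a b : E → ℝ}
    (ha : ∀ v ∉ τ, a v = 0) (hb : ∀ v ∉ τ, b v = 0)
    (ha1 : ∑ v ∈ τ, a v = 1) (hb1 : ∑ v ∈ τ, b v = 1)
    (hab : ∑ v ∈ τ, a v • v = ∑ v ∈ τ, b v • v) : a = b := by
  classical
  have ha1' : ∑ i : τ, a ↑i = 1 := by rw [Finset.sum_coe_sort]; exact ha1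
  have hb1' : ∑ i : τ, b ↑i = 1 := by rw [Finset.sum_coe_sort]; exact hb1
  have hcomb : Finset.univ.affineCombination ℝ ((↑) : τ → E) (fun i => a ↑i)
      = Finset.univ.affineCombination ℝ ((↑) : τ → E) (fun i => b ↑i) := by
    rw [Finset.affineCombination_eq_linear_combination _ _ _ ha1',
      Finset.affineCombination_eq_linear_combination _ _ _ hb1',
      Finset.sum_coe_sort τ (fun v => a v • v), Finset.sum_coe_sort τ (fun v => b v • v)]
    exact hab
  have := hind.indicator_eq_of_affineCombination_eq Finset.univ Finset.univ
    (fun i => a ↑i) (fun i => b ↑i) ha1' hb1' hcomb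
  funext v
  by_cases hv : v ∈ τ
  · have h2 := congrFun this ⟨v, hv⟩
    simpa using h2
  · rw [ha v hv, hb v hv]

/-- Existence of convex-combination weights. -/
theorem exists_rep {τ : Finset E} {x : E} (hx : x ∈ convexHull ℝ (τ : Set E)) :
    ∃ w : E → ℝ, (∀ v, 0 ≤ w v) ∧ (∀ v ∉ τ, w v = 0) ∧
      ∑ v ∈ τ, w v = 1 ∧ ∑ v ∈ τ, w v • v = x := by
  classical
  obtain ⟨w, h0, h1, hs⟩ := Finset.mem_convexHull'.1 hx
  refine ⟨fun v => if v ∈ τ then w v else 0, fun v => ?_, fun v hv => if_neg hv, ?_, ?_⟩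
  · by_cases hv : v ∈ τ
    · simpa [hv] using h0 v hv
    · simp [hv]
  · have h : ∀ v ∈ τ, (if v ∈ τ then w v else 0) = w v := fun v hv => if_pos hv
    rw [Finset.sum_congr rfl h]; exact h1
  · have h : ∀ v ∈ τ, (if v ∈ τ then w v else 0) • v = w v • v := fun v hv => by rw [if_pos hv]
    rw [Finset.sum_congr rfl h]; exact hs

theorem mem_intrinsicInterior_of_pos {τ : Finset E}
    (hind : AffineIndependent ℝ ((↑) : τ → E)) {w : E → ℝ}
    (hw0 : ∀ v ∈ τ, 0 < w v) (hw1 : ∑ v ∈ τ, w v = 1) {x : E}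
    (hx : ∑ v ∈ τ, w v • v = x) :
    x ∈ intrinsicInterior ℝ (convexHull ℝ (τ : Set E)) := by
  classical
  have hτne : τ.Nonempty := by
    rcases Finset.eq_empty_or_nonempty τ with h | h
    · exfalso; rw [h] at hw1; simp at hw1
    · exact h
  set s : Set E := convexHull ℝ (τ : Set E) with hs
  have hxs : x ∈ s := by
    rw [hs, Finset.mem_convexHull']
    exact ⟨w, fun v hv => (hw0 v hv).le, hw1, hx⟩
  have hτs : ∀ v ∈ τ, (v : E) ∈ s := fun v hv => subset_convexHull ℝ _ hv
  set A : AffineSubspace ℝ E := affineSpan ℝ s with hA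
  have hτA : ∀ v ∈ τ, (v : E) ∈ A := fun v hv => subset_affineSpan ℝ s (hτs v hv)
  haveI : Nonempty A := ⟨⟨_, hτA _ hτne.choose_spec⟩⟩
  haveI : Nonempty s := ⟨⟨x, hxs⟩⟩
  set p : τ → A := fun v => ⟨(v : E), hτA v v.2⟩ with hp
  have hpind : AffineIndependent ℝ p := by
    apply AffineIndependent.of_comp A.subtype
    exact hind
  have hw1' : ∑ i : τ, w ↑i = 1 := by rw [Finset.sum_coe_sort]; exact hw1
  -- the span of `range p` is everything
  have hmap : (affineSpan ℝ (Set.range p)).map A.subtype = affineSpan ℝ (τ : Set E) := by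
    rw [AffineSubspace.map_span]
    congr 1
    ext v
    constructor
    · rintro ⟨y, ⟨i, rfl⟩, rfl⟩; exact i.2
    · intro hv; exact ⟨p ⟨v, hv⟩, ⟨⟨v, hv⟩, rfl⟩, rfl⟩
  have htot : affineSpan ℝ (Set.range p) = ⊤ := by
    rw [← affineSpan_coe_preimage_eq_top s]
    refine le_antisymm ?_ ?_
    · exact affineSpan_mono _ (by rintro y ⟨i, rfl⟩; exact subset_convexHull ℝ _ i.2)
    · rw [affineSpan_le]
      rintro y (hy : (y : E) ∈ s)
      have : (y : E) ∈ (affineSpan ℝ (Set.range p)).map A.subtype := by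
        rw [hmap]
        exact convexHull_subset_affineSpan _ hy
      obtain ⟨z, hz, hzy⟩ := this
      have : z = y := Subtype.coe_injective hzy
      rw [← this]; exact hz
  -- move to the direction (a normed vector space)
  obtain ⟨z₀⟩ := (inferInstance : Nonempty A)
  set ψ : A →ᵃ[ℝ] A.direction := (AffineIsometryEquiv.constVSub ℝ z₀).toAffineEquiv.toAffineMap
    with hψ
  have hψinj : Function.Injective ψ :=
    (AffineIsometryEquiv.constVSub ℝ z₀).toAffineEquiv.injective
  set q : τ → A.direction := fun v => ψ (p v) with hq
  have hqind : AffineIndependent ℝ q := hpind.map' ψ hψinj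
  have hqtot : affineSpan ℝ (Set.range q) = ⊤ := by
    rw [eq_top_iff]
    rintro z -
    have hz : (AffineIsometryEquiv.constVSub ℝ z₀).symm z ∈ affineSpan ℝ (Set.range p) := by
      rw [htot]; trivial
    have : z ∈ (affineSpan ℝ (Set.range p)).map ψ :=
      ⟨_, hz, (AffineIsometryEquiv.constVSub ℝ z₀).apply_symm_apply z⟩
    rw [AffineSubspace.map_span, ← Set.range_comp] at this
    exact this
  set B : AffineBasis τ ℝ A.direction := ⟨q, hqind, hqtot⟩ with hB
  -- the point as an affine combination
  set y : A := ⟨x, subset_affineSpan ℝ s hxs⟩ with hy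
  have hcval : A.subtype (Finset.univ.affineCombination ℝ p (fun i => w ↑i)) = x := by
    rw [Finset.map_affineCombination _ p _ hw1' A.subtype]
    have h2 : A.subtype ∘ p = ((↑) : τ → E) := rfl
    rw [h2, Finset.affineCombination_eq_linear_combination _ _ _ hw1',
      Finset.sum_coe_sort τ (fun v => w v • v)]
    exact hx
  have hcomb : y = Finset.univ.affineCombination ℝ p (fun i => w ↑i) :=
    Subtype.coe_injective hcval.symm
  have hψy : ψ y = Finset.univ.affineCombination ℝ q (fun i => w ↑i) := by
    rw [hcomb, Finset.map_affineCombination _ p _ hw1' ψ]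
    rfl
  -- conclude membership in the intrinsic interior
  rw [mem_intrinsicInterior]
  refine ⟨y, ?_, rfl⟩
  have hset : ((↑) ⁻¹' s : Set A) = ψ ⁻¹' (convexHull ℝ (Set.range q)) := by
    ext z
    simp only [Set.mem_preimage]
    constructor
    · intro hz
      obtain ⟨u, hu0, hu1, hux⟩ := Finset.mem_convexHull'.1 hz
      have hu1' : ∑ i : τ, u ↑i = 1 := by rw [Finset.sum_coe_sort]; exact hu1
      have hzval : A.subtype (Finset.univ.affineCombination ℝ p (fun i => u ↑i)) = ↑z := by
        rw [Finset.map_affineCombination _ p _ hu1' A.subtype]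
        have h2 : A.subtype ∘ p = ((↑) : τ → E) := rfl
        rw [h2, Finset.affineCombination_eq_linear_combination _ _ _ hu1',
          Finset.sum_coe_sort τ (fun v => u v • v)]
        exact hux
      have hzcomb : z = Finset.univ.affineCombination ℝ p (fun i => u ↑i) :=
        Subtype.coe_injective hzval.symm
      have : ψ z = Finset.univ.affineCombination ℝ q (fun i => u ↑i) := by
        rw [hzcomb, Finset.map_affineCombination _ p _ hu1' ψ]; rfl
      rw [this]
      exact affineCombination_mem_convexHull (fun i _ => hu0 _ i.2) hu1'
    · intro hz
      -- map back to `E` with an affine map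
      set ρ : A.direction →ᵃ[ℝ] E :=
        A.subtype.comp (AffineIsometryEquiv.constVSub ℝ z₀).symm.toAffineEquiv.toAffineMap with hρ
      have hρψ : ∀ a : A, ρ (ψ a) = (a : E) := fun a => by simp [hρ, hψ]
      have himg : ρ '' (convexHull ℝ (Set.range q)) ⊆ s := by
        rw [AffineMap.image_convexHull]
        apply convexHull_mono
        rintro v ⟨v', ⟨i, rfl⟩, rfl⟩
        have : ρ (q i) = (i : E) := by rw [hq, hρψ]
        rw [this]; exact i.2
      have : ρ (ψ z) ∈ s := himg ⟨ψ z, hz, rfl⟩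
      rwa [hρψ] at this
  have hmem : ψ y ∈ interior (convexHull ℝ (Set.range q)) := by
    have hrange : Set.range q = Set.range B := rfl
    rw [hrange, B.interior_convexHull]
    intro i
    have hc : B.coord i (ψ y) = w ↑i := by
      rw [hψy]
      exact B.coord_apply_combination_of_mem (Finset.mem_univ i) hw1'
    rw [hc]
    exact hw0 _ i.2
  rw [hset,
    show (⇑ψ ⁻¹' (convexHull ℝ (Set.range q)))
      = ⇑(AffineIsometryEquiv.constVSub ℝ z₀).toHomeomorph ⁻¹' (convexHull ℝ (Set.range q))
      from rfl,
    ← Homeomorph.preimage_interior]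
  exact hmem

/-- The representation predicate. -/
def IsRep (S : Geometry.SimplicialComplex ℝ E) (x : E) (w : E → ℝ) : Prop :=
  (∀ v, 0 ≤ w v) ∧ ∃ τ ∈ S.faces, (∀ v ∉ τ, w v = 0) ∧
    ∑ v ∈ τ, w v = 1 ∧ ∑ v ∈ τ, w v • v = x


theorem isRep_unique (S : Geometry.SimplicialComplex ℝ E) {x : E} {a b : E → ℝ}
    (hA : IsRep S x a) (hB : IsRep S x b) : a = b := by
  classical
  obtain ⟨ha0, τ, hτ, haz, ha1, has⟩ := hA
  obtain ⟨hb0, τ', hτ', hbz, hb1, hbs⟩ := hB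
  have hxτ : x ∈ convexHull ℝ (τ : Set E) := by
    rw [Finset.mem_convexHull']
    exact ⟨a, fun v _ => ha0 v, ha1, has⟩
  have hxτ' : x ∈ convexHull ℝ (τ' : Set E) := by
    rw [Finset.mem_convexHull']
    exact ⟨b, fun v _ => hb0 v, hb1, hbs⟩
  have hxi : x ∈ convexHull ℝ ((τ ∩ τ' : Finset E) : Set E) := by
    have := S.inter_subset_convexHull hτ hτ' ⟨hxτ, hxτ'⟩
    rwa [← Finset.coe_inter] at this
  obtain ⟨u, hu0, huz, hu1, hus⟩ := exists_rep hxi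
  -- `u` is also a `τ`-representation and a `τ'`-representation
  have extend : ∀ (σ : Finset E), τ ∩ τ' ⊆ σ →
      (∑ v ∈ σ, u v = 1 ∧ ∑ v ∈ σ, u v • v = x ∧ ∀ v ∉ σ, u v = 0) := by
    intro σ hσ
    refine ⟨?_, ?_, fun v hv => huz v (fun h => hv (hσ h))⟩
    · rw [← Finset.sum_subset hσ (fun v _ hv => huz v hv)]
      exact hu1
    · rw [← Finset.sum_subset hσ (fun v _ hv => by rw [huz v hv, zero_smul])]
      exact hus
  obtain ⟨hu1τ, husτ, huzτ⟩ := extend τ Finset.inter_subset_left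
  obtain ⟨hu1τ', husτ', huzτ'⟩ := extend τ' Finset.inter_subset_right
  have h1 : a = u := eq_of_rep (S.indep hτ) haz huzτ ha1 hu1τ (by rw [has, husτ])
  have h2 : b = u := eq_of_rep (S.indep hτ') hbz huzτ' hb1 hu1τ' (by rw [hbs, husτ'])
  rw [h1, h2]

theorem exists_isRep (S : Geometry.SimplicialComplex ℝ E) (x : S.space) :
    ∃ w : E → ℝ, IsRep S x.1 w := by
  obtain ⟨τ, hτ, hx⟩ := Geometry.SimplicialComplex.mem_space_iff.1 x.2
  obtain ⟨w, h0, hz, h1, hs⟩ := exists_rep hx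
  exact ⟨w, h0, τ, hτ, hz, h1, hs⟩

/-- Barycentric coordinates on the space of a simplicial complex. -/
noncomputable def bary (S : Geometry.SimplicialComplex ℝ E) (x : S.space) : E → ℝ :=
  (exists_isRep S x).choose

theorem bary_isRep (S : Geometry.SimplicialComplex ℝ E) (x : S.space) :
    IsRep S x.1 (bary S x) := (exists_isRep S x).choose_spec

theorem bary_eq (S : Geometry.SimplicialComplex ℝ E) {x : S.space} {w : E → ℝ}
    (h : IsRep S x.1 w) : bary S x = w := isRep_unique S (bary_isRep S x) h

/-- Continuity of the barycentric coordinates on each closed cell. -/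
theorem continuousOn_bary (S : Geometry.SimplicialComplex ℝ E) (v : E) {τ : Finset E}
    (hτ : τ ∈ S.faces) :
    ContinuousOn (fun x : S.space => bary S x v)
      (Subtype.val ⁻¹' (convexHull ℝ (τ : Set E))) := by
  classical
  set K : Set E := convexHull ℝ (τ : Set E) with hK
  -- the parametrization of the cell by the standard simplex
  have hmem : ∀ f : stdSimplex ℝ τ, (∑ i : τ, f.1 i • (i : E)) ∈ K :=
    fun f => mem_convexHull_of_exists_fintype f.1 (fun i => (i : E))
      (fun i => f.2.1 i) f.2.2 (fun i => i.2) rfl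
  set φ : stdSimplex ℝ τ → K := fun f => ⟨∑ i : τ, f.1 i • (i : E), hmem f⟩ with hφ
  -- extension of weights to `E`
  set ext : (τ → ℝ) → E → ℝ := fun f v => if h : v ∈ τ then f ⟨v, h⟩ else 0 with hext
  have hsum_ext : ∀ (f : τ → ℝ), ∑ v ∈ τ, ext f v = ∑ i : τ, f i := by
    intro f
    rw [← Finset.sum_coe_sort τ (ext f)]
    exact Finset.sum_congr rfl fun i _ => by simp [hext]
  have hsmul_ext : ∀ (f : τ → ℝ), ∑ v ∈ τ, ext f v • v = ∑ i : τ, f i • (i : E) := by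
    intro f
    rw [← Finset.sum_coe_sort τ (fun v => ext f v • v)]
    exact Finset.sum_congr rfl fun i _ => by simp [hext]
  have hrep : ∀ f : stdSimplex ℝ τ, IsRep S ((φ f : E)) (ext f.1) := by
    intro f
    refine ⟨fun u => ?_, τ, hτ, fun u hu => dif_neg hu, ?_, ?_⟩
    · by_cases h : u ∈ τ
      · simpa [hext, h] using f.2.1 ⟨u, h⟩
      · simp [hext, h]
    · rw [hsum_ext]; exact f.2.2
    · rw [hsmul_ext]
  have hφcont : Continuous φ := by
    apply Continuous.subtype_mk
    exact continuous_finset_sum _ fun i _ =>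
      ((continuous_apply (i : τ)).comp continuous_subtype_val).smul continuous_const
  have hφbij : Function.Bijective φ := by
    constructor
    · intro f g hfg
      have h1 : ∑ v ∈ τ, ext f.1 v • v = ∑ v ∈ τ, ext g.1 v • v := by
        rw [hsmul_ext, hsmul_ext]
        exact congrArg Subtype.val hfg
      have h2 := eq_of_rep (S.indep hτ) (fun u hu => dif_neg hu) (fun u hu => dif_neg hu)
        (by rw [hsum_ext]; exact f.2.2) (by rw [hsum_ext]; exact g.2.2) h1
      apply Subtype.ext
      funext i
      have := congrFun h2 (i : E)
      simpa [hext] using this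
    · rintro ⟨y, hy⟩
      obtain ⟨w, h0, hz, h1, hs⟩ := exists_rep hy
      refine ⟨⟨fun i => w ↑i, fun i => h0 ↑i, ?_⟩, ?_⟩
      · rw [Finset.sum_coe_sort τ w]; exact h1
      · apply Subtype.ext
        show ∑ i : τ, w ↑i • (i : E) = y
        rw [Finset.sum_coe_sort τ (fun v => w v • v)]; exact hs
  haveI : CompactSpace (stdSimplex ℝ τ) := isCompact_iff_compactSpace.mp (isCompact_stdSimplex ℝ τ)
  set e : stdSimplex ℝ τ ≃ K := Equiv.ofBijective φ hφbij with he
  have hecont : Continuous e := hφcont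
  set h : stdSimplex ℝ τ ≃ₜ K := hecont.homeoOfEquivCompactToT2 with hh
  -- the coordinate function on the cell
  have hbary : ∀ x : S.space, (hx : x.1 ∈ K) → bary S x v = ext (h.symm ⟨x.1, hx⟩).1 v := by
    intro x hx
    have h1 : φ (h.symm ⟨x.1, hx⟩) = ⟨x.1, hx⟩ := h.apply_symm_apply ⟨x.1, hx⟩
    have h2 : IsRep S x.1 (ext (h.symm ⟨x.1, hx⟩).1) := by
      have := hrep (h.symm ⟨x.1, hx⟩)
      rwa [h1] at this
    rw [bary_eq S h2]
  rw [continuousOn_iff_continuous_restrict]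
  have : (Subtype.val ⁻¹' K : Set S.space).domRestrict (fun x : S.space => bary S x v)
      = (fun k : K => ext (h.symm k).1 v) ∘
        (fun p : (Subtype.val ⁻¹' K : Set S.space) => (⟨p.1.1, p.2⟩ : K)) := by
    funext p
    exact hbary p.1 p.2
  rw [this]
  apply Continuous.comp
  · by_cases hv : v ∈ τ
    · simp only [hext, dif_pos hv]
      exact (continuous_apply (⟨v, hv⟩ : τ)).comp
        (continuous_subtype_val.comp h.symm.continuous)
    · simp only [hext, dif_neg hv]
      exact continuous_const
  · exact Continuous.subtype_mk (continuous_subtype_val.comp continuous_subtype_val) _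

/-- Global continuity of barycentric coordinates. -/
theorem continuous_bary (S : Geometry.SimplicialComplex ℝ E) (hfin : S.faces.Finite) (v : E) :
    Continuous (fun x : S.space => bary S x v) := by
  haveI : Finite S.faces := hfin.to_subtype
  apply LocallyFinite.continuous
    (f := fun τ : S.faces => (Subtype.val ⁻¹' (convexHull ℝ ((τ : Finset E) : Set E)) :
      Set S.space))
  · exact locallyFinite_of_finite _
  · rw [Set.eq_univ_iff_forall]
    intro x
    obtain ⟨τ, hτ, hx⟩ := Geometry.SimplicialComplex.mem_space_iff.1 x.2
    exact Set.mem_iUnion.2 ⟨⟨τ, hτ⟩, hx⟩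
  · intro τ
    exact (((τ : Finset E).finite_toSet.isCompact_convexHull ℝ).isClosed).preimage
      continuous_subtype_val
  · intro τ
    exact continuousOn_bary S v τ.2

end Stmt17Aux

open Stmt17Aux

theorem stmt17 {E : Type*} [NormedAddCommGroup E] [NormedSpace ℝ E]
    (S : Geometry.SimplicialComplex ℝ E)
    (hfin : S.faces.Finite) (hne : S.faces.Nonempty) :
    ∃ w : S.faces → (S.space → ℝ),
      (∀ σ : S.faces, Continuous (w σ)) ∧
      (∀ (σ : S.faces) (x : S.space), w σ x ∈ Set.Icc (0 : ℝ) 1) ∧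
      -- (i): support of `w σ` is contained in `Star(σ)`
      (∀ (σ : S.faces), ∀ x ∈ closure {y : S.space | w σ y ≠ 0},
        ∃ τ ∈ S.faces, (σ : Finset E) ⊆ τ ∧
          (x : E) ∈ intrinsicInterior ℝ (convexHull ℝ (τ : Set E))) ∧
      -- (ii): faces of equal cardinality have disjoint supports
      (∀ σ σ' : S.faces, σ ≠ σ' → (σ : Finset E).card = (σ' : Finset E).card →
        closure {y : S.space | w σ y ≠ 0} ∩ closure {y : S.space | w σ' y ≠ 0} = ∅) ∧
      -- (iii): the sets `w σ ⁻¹' {1}` cover `S.space`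
      (∀ x : S.space, ∃ σ : S.faces, w σ x = 1) := by
  classical
  set b : E → S.space → ℝ := fun v x => Stmt17Aux.bary S x v with hbdef
  have hbcont : ∀ v, Continuous (b v) := fun v => continuous_bary S hfin v
  have hb0 : ∀ v (x : S.space), 0 ≤ b v x := fun v x => (bary_isRep S x).1 v
  set V : Finset E := hfin.toFinset.sup id with hVdef
  have hfaceV : ∀ {τ : Finset E}, τ ∈ S.faces → τ ⊆ V := by
    intro τ hτ v hv
    exact Finset.mem_sup.2 ⟨τ, hfin.mem_toFinset.2 hτ, hv⟩
  have hfane : ∀ {τ : Finset E}, τ ∈ S.faces → τ.Nonempty := by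
    intro τ hτ
    rcases Finset.eq_empty_or_nonempty τ with h | h
    · exact absurd (h ▸ hτ) S.empty_notMem
    · exact h
  obtain ⟨N, hNdef⟩ : ∃ n : ℕ, V.card = n := ⟨_, rfl⟩
  have hNpos : 0 < N := by
    obtain ⟨τ0, hτ0⟩ := hne
    obtain ⟨v, hv⟩ := hfane hτ0
    rw [← hNdef]
    exact Finset.card_pos.2 ⟨v, hfaceV hτ0 hv⟩
  have hNR : (0:ℝ) < N := by exact_mod_cast hNpos
  set δ : ℝ := ((N:ℝ) * ((N:ℝ)+1))⁻¹ with hδdef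
  have hδ : 0 < δ := by
    rw [hδdef]
    exact inv_pos.2 (mul_pos hNR (by linarith))
  set ε : ℝ := δ/2 with hεdef
  have hε : 0 < ε := by rw [hεdef]; linarith
  -- the carrier of a point
  set C : S.space → Finset E := fun x => V.filter (fun v => b v x ≠ 0) with hCdef
  have hCspec : ∀ x : S.space, C x ∈ S.faces ∧ (∀ v ∉ C x, b v x = 0) ∧
      ∑ v ∈ C x, b v x = 1 ∧ ∑ v ∈ C x, b v x • v = (x:E) := by
    intro x
    obtain ⟨h0, τ, hτ, hz, h1, hs⟩ := bary_isRep S x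
    have hCeq : C x = τ.filter (fun v => b v x ≠ 0) := by
      ext v
      simp only [hCdef, Finset.mem_filter]
      constructor
      · rintro ⟨hvV, hbv⟩
        refine ⟨?_, hbv⟩
        by_contra hvτ
        exact hbv (hz v hvτ)
      · rintro ⟨hvτ, hbv⟩
        exact ⟨hfaceV hτ hvτ, hbv⟩
    have hzero : ∀ v ∉ C x, b v x = 0 := by
      intro v hv
      by_contra hbv
      by_cases hvτ : v ∈ τ
      · exact hv (by rw [hCeq]; exact Finset.mem_filter.2 ⟨hvτ, hbv⟩)
      · exact hbv (hz v hvτ)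
    have hsub : C x ⊆ τ := by rw [hCeq]; exact Finset.filter_subset _ _
    have h1' : ∑ v ∈ C x, b v x = 1 := by
      have heq : ∑ v ∈ C x, b v x = ∑ v ∈ τ, b v x :=
        Finset.sum_subset hsub (fun v _ hv => hzero v hv)
      rw [heq]; exact h1
    have hsx : ∑ v ∈ C x, b v x • v = (x:E) := by
      have heq : ∑ v ∈ C x, b v x • v = ∑ v ∈ τ, b v x • v :=
        Finset.sum_subset hsub (fun v _ hv => by rw [hzero v hv, zero_smul])
      rw [heq]; exact hs
    have hCne : (C x).Nonempty := by
      rcases Finset.eq_empty_or_nonempty (C x) with h | h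
      · exfalso; rw [h] at h1'; simp at h1'
      · exact h
    exact ⟨S.down_closed hτ hsub hCne, hzero, h1', hsx⟩
  have hCpos : ∀ (x : S.space) (v), v ∈ C x → 0 < b v x := fun x v hv =>
    lt_of_le_of_ne (hb0 v x) (Ne.symm (Finset.mem_filter.1 hv).2)
  have hCsubV : ∀ x : S.space, C x ⊆ V := fun x => Finset.filter_subset _ _
  have hCcard : ∀ x : S.space, (C x).card ≤ N := fun x =>
    hNdef ▸ Finset.card_le_card (hCsubV x)
  have hint : ∀ x : S.space,
      (x:E) ∈ intrinsicInterior ℝ (convexHull ℝ ((C x : Finset E) : Set E)) := by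
    intro x
    obtain ⟨hface, hzero, h1, hsx⟩ := hCspec x
    exact mem_intrinsicInterior_of_pos (S.indep hface) (fun v hv => hCpos x v hv) h1 hsx
  have hmax : ∀ x : S.space, ∃ v ∈ C x, (N:ℝ)⁻¹ ≤ b v x := by
    intro x
    obtain ⟨hface, hzero, h1, hsx⟩ := hCspec x
    have hCne : (C x).Nonempty := hfane hface
    have hsum : ∑ _v ∈ C x, (N:ℝ)⁻¹ ≤ ∑ v ∈ C x, b v x := by
      rw [h1, Finset.sum_const, nsmul_eq_mul]
      calc ((C x).card : ℝ) * (N:ℝ)⁻¹ ≤ (N:ℝ) * (N:ℝ)⁻¹ := by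
            apply mul_le_mul_of_nonneg_right _ (by positivity)
            exact_mod_cast hCcard x
        _ = 1 := mul_inv_cancel₀ hNR.ne'
    exact Finset.exists_le_of_sum_le hCne hsum
  -- the functions
  have hσne : ∀ σ : S.faces, (σ : Finset E).Nonempty := fun σ => hfane σ.2
  set m : S.faces → S.space → ℝ := fun σ x => (σ : Finset E).inf' (hσne σ) (fun v => b v x)
    with hmdef
  set M : S.faces → S.space → ℝ := fun σ x =>
    if h : (V \ (σ : Finset E)).Nonempty then (V \ (σ : Finset E)).sup' h (fun v => b v x) else 0
    with hMdef
  set g : S.faces → S.space → ℝ := fun σ x => m σ x - M σ x with hgdef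
  set w : S.faces → S.space → ℝ := fun σ x => max 0 (min 1 ((g σ x - ε)/ε)) with hwdef
  have hMle : ∀ (σ : S.faces) (x : S.space) (u), u ∈ V \ (σ : Finset E) → b u x ≤ M σ x := by
    intro σ x u hu
    have h : (V \ (σ : Finset E)).Nonempty := ⟨u, hu⟩
    have hMeq : M σ x = (V \ (σ : Finset E)).sup' h (fun v => b v x) := dif_pos h
    rw [hMeq]
    exact Finset.le_sup' _ hu
  have hM0 : ∀ (σ : S.faces) (x : S.space), 0 ≤ M σ x := by
    intro σ x
    by_cases h : (V \ (σ : Finset E)).Nonempty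
    · obtain ⟨u, hu⟩ := h
      exact le_trans (hb0 u x) (hMle σ x u hu)
    · have hMeq : M σ x = 0 := dif_neg h
      rw [hMeq]
  have hMcont : ∀ σ, Continuous (M σ) := by
    intro σ
    by_cases h : (V \ (σ : Finset E)).Nonempty
    · have hMeq : M σ = fun x => (V \ (σ : Finset E)).sup' h (fun v => b v x) := by
        funext x; exact dif_pos h
      rw [hMeq]
      exact continuous_finset_sup' h (fun i => hbcont i)
    · have hMeq : M σ = fun _ => 0 := by funext x; exact dif_neg h
      rw [hMeq]; exact continuous_const
  have hmcont : ∀ σ, Continuous (m σ) := fun σ =>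
    continuous_finset_inf' (hσne σ) (fun i => hbcont i)
  have hgcont : ∀ σ, Continuous (g σ) := fun σ => (hmcont σ).sub (hMcont σ)
  have hwcont : ∀ σ, Continuous (w σ) := fun σ =>
    continuous_const.max (continuous_const.min
      (((hgcont σ).sub continuous_const).div_const ε))
  -- support estimate
  have hsupp : ∀ (σ : S.faces) (x : S.space),
      x ∈ closure {y : S.space | w σ y ≠ 0} → ε ≤ g σ x := by
    intro σ x hx
    have hsubset : {y : S.space | w σ y ≠ 0} ⊆ {y : S.space | ε ≤ g σ y} := by
      intro y hy
      simp only [Set.mem_setOf_eq] at hy ⊢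
      by_contra hlt
      push_neg at hlt
      apply hy
      have h1 : (g σ y - ε)/ε ≤ 0 := div_nonpos_of_nonpos_of_nonneg (by linarith) hε.le
      have h2 : min 1 ((g σ y - ε)/ε) ≤ 0 := le_trans (min_le_right _ _) h1
      exact max_eq_left h2
    have hclosed : IsClosed {y : S.space | ε ≤ g σ y} :=
      isClosed_le continuous_const (hgcont σ)
    exact (closure_minimal hsubset hclosed) hx
  refine ⟨w, fun σ => hwcont σ, ?_, ?_, ?_, ?_⟩
  · -- values in [0,1]
    intro σ x
    exact ⟨le_max_left _ _, max_le zero_le_one (min_le_left _ _)⟩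
  · -- (i)
    intro σ x hx
    have hg := hsupp σ x hx
    refine ⟨C x, (hCspec x).1, ?_, hint x⟩
    intro v hv
    have h1 : m σ x ≤ b v x := Finset.inf'_le _ hv
    have hgx : g σ x = m σ x - M σ x := rfl
    have h2 : ε ≤ m σ x := by have := hM0 σ x; rw [hgx] at hg; linarith
    have hbv : 0 < b v x := lt_of_lt_of_le hε (le_trans h2 h1)
    exact Finset.mem_filter.2 ⟨hfaceV σ.2 hv, hbv.ne'⟩
  · -- (ii)
    intro σ σ' hσσ hcard
    rw [Set.eq_empty_iff_forall_notMem]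
    rintro x ⟨hx1, hx2⟩
    have hg1 := hsupp σ x hx1
    have hg2 := hsupp σ' x hx2
    have hvalne : (σ : Finset E) ≠ (σ' : Finset E) := fun h => hσσ (Subtype.ext h)
    have hnsub : ¬ (σ : Finset E) ⊆ (σ' : Finset E) := fun h =>
      hvalne (Finset.eq_of_subset_of_card_le h (le_of_eq hcard.symm))
    have hnsub' : ¬ (σ' : Finset E) ⊆ (σ : Finset E) := fun h =>
      hvalne (Finset.eq_of_subset_of_card_le h (le_of_eq hcard)).symm
    obtain ⟨u, huσ, huσ'⟩ := Finset.not_subset.1 hnsub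
    obtain ⟨u', hu'σ', hu'σ⟩ := Finset.not_subset.1 hnsub'
    have hu'VS : u' ∈ V \ (σ : Finset E) := Finset.mem_sdiff.2 ⟨hfaceV σ'.2 hu'σ', hu'σ⟩
    have huVS : u ∈ V \ (σ' : Finset E) := Finset.mem_sdiff.2 ⟨hfaceV σ.2 huσ, huσ'⟩
    have h1 : b u' x ≤ M σ x := hMle σ x u' hu'VS
    have h2 : m σ x ≤ b u x := Finset.inf'_le _ huσ
    have h3 : b u x ≤ M σ' x := hMle σ' x u huVS
    have h4 : m σ' x ≤ b u' x := Finset.inf'_le _ hu'σ'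
    have e1 : g σ x = m σ x - M σ x := rfl
    have e2 : g σ' x = m σ' x - M σ' x := rfl
    rw [e1] at hg1
    rw [e2] at hg2
    linarith
  · -- (iii)
    intro x
    obtain ⟨hface, hzero, h1, hsx⟩ := hCspec x
    obtain ⟨vmax, hvmaxC, hvmax⟩ := hmax x
    set idx : E → ℕ := fun v => ⌊b v x / δ⌋₊ with hidxdef
    set J : Finset ℕ := insert 0 (((C x).erase vmax).image idx) with hJdef
    have hJcard : J.card < N + 1 := by
      calc J.card ≤ (((C x).erase vmax).image idx).card + 1 := Finset.card_insert_le _ _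
        _ ≤ ((C x).erase vmax).card + 1 := Nat.add_le_add_right Finset.card_image_le 1
        _ = (C x).card - 1 + 1 := by rw [Finset.card_erase_of_mem hvmaxC]
        _ = (C x).card := Nat.succ_pred_eq_of_pos (Finset.card_pos.2 ⟨vmax, hvmaxC⟩)
        _ ≤ N := hCcard x
        _ < N + 1 := Nat.lt_succ_self N
    obtain ⟨j, hjr, hjJ⟩ : ∃ j ∈ Finset.range (N+1), j ∉ J := by
      by_contra h
      push_neg at h
      have hsub : Finset.range (N+1) ⊆ J := h
      have := Finset.card_le_card hsub
      rw [Finset.card_range] at this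
      omega
    have hjN : j ≤ N := Nat.lt_succ_iff.1 (Finset.mem_range.1 hjr)
    have hNδ : ((N:ℝ)+1) * δ = (N:ℝ)⁻¹ := by
      rw [hδdef, mul_inv]
      have h1 : ((N:ℝ)+1) ≠ 0 := by linarith
      calc ((N:ℝ)+1) * ((N:ℝ)⁻¹ * ((N:ℝ)+1)⁻¹)
          = (((N:ℝ)+1) * ((N:ℝ)+1)⁻¹) * (N:ℝ)⁻¹ := by ring
        _ = (N:ℝ)⁻¹ := by rw [mul_inv_cancel₀ h1, one_mul]
    have hjδ : ((j:ℝ)+1) * δ ≤ (N:ℝ)⁻¹ := by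
      rw [← hNδ]
      apply mul_le_mul_of_nonneg_right _ hδ.le
      have hc : (j:ℝ) ≤ (N:ℝ) := by exact_mod_cast hjN
      linarith
    set σ0 : Finset E := V.filter (fun v => ((j:ℝ)+1) * δ ≤ b v x) with hσ0def
    have hσ0sub : σ0 ⊆ C x := by
      intro v hv
      obtain ⟨hvV, hvb⟩ := Finset.mem_filter.1 hv
      refine Finset.mem_filter.2 ⟨hvV, ?_⟩
      have hpos : (0:ℝ) < ((j:ℝ)+1) * δ := mul_pos (by positivity) hδ
      exact (lt_of_lt_of_le hpos hvb).ne'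
    have hvmaxσ0 : vmax ∈ σ0 :=
      Finset.mem_filter.2 ⟨hCsubV x hvmaxC, le_trans hjδ hvmax⟩
    have hσ0face : σ0 ∈ S.faces :=
      S.down_closed hface hσ0sub ⟨vmax, hvmaxσ0⟩
    have hout : ∀ v ∈ V, v ∉ σ0 → b v x ≤ (j:ℝ) * δ := by
      intro v hvV hvσ0
      have hvb : b v x < ((j:ℝ)+1) * δ := by
        by_contra h
        push_neg at h
        exact hvσ0 (Finset.mem_filter.2 ⟨hvV, h⟩)
      by_contra h
      push_neg at h
      have hidxv : idx v = j := by
        have hb0' : (0:ℝ) ≤ b v x / δ := div_nonneg (hb0 v x) hδ.le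
        rw [hidxdef]
        rw [Nat.floor_eq_iff (by exact_mod_cast hb0')]
        constructor
        · rw [le_div_iff₀ hδ]
          linarith
        · rw [div_lt_iff₀ hδ]
          push_cast
          linarith
      have hvJ : idx v ∈ J := by
        by_cases hvC : v ∈ C x
        · have hvne : v ≠ vmax := by
            rintro rfl
            have hlt : b v x < (N:ℝ)⁻¹ := lt_of_lt_of_le hvb hjδ
            linarith
          exact Finset.mem_insert_of_mem
            (Finset.mem_image.2 ⟨v, Finset.mem_erase.2 ⟨hvne, hvC⟩, rfl⟩)
        · exfalso
          have hz0 : b v x = 0 := hzero v hvC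
          have : (0:ℝ) ≤ (j:ℝ) * δ := mul_nonneg (by positivity) hδ.le
          rw [hz0] at h
          linarith
      rw [hidxv] at hvJ
      exact hjJ hvJ
    have hmge : ((j:ℝ)+1) * δ ≤ m ⟨σ0, hσ0face⟩ x := by
      apply Finset.le_inf'
      intro v hv
      exact (Finset.mem_filter.1 hv).2
    have hMle' : M ⟨σ0, hσ0face⟩ x ≤ (j:ℝ) * δ := by
      by_cases h : (V \ σ0).Nonempty
      · have hMeq : M ⟨σ0, hσ0face⟩ x = (V \ σ0).sup' h (fun v => b v x) := dif_pos h
        rw [hMeq]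
        apply Finset.sup'_le
        intro v hv
        obtain ⟨hvV, hvσ0⟩ := Finset.mem_sdiff.1 hv
        exact hout v hvV hvσ0
      · have hMeq : M ⟨σ0, hσ0face⟩ x = 0 := dif_neg h
        rw [hMeq]
        exact mul_nonneg (by positivity) hδ.le
    refine ⟨⟨σ0, hσ0face⟩, ?_⟩
    have hgge : δ ≤ g ⟨σ0, hσ0face⟩ x := by
      have e : g ⟨σ0, hσ0face⟩ x = m ⟨σ0, hσ0face⟩ x - M ⟨σ0, hσ0face⟩ x := rfl
      rw [e]
      have : ((j:ℝ)+1) * δ = (j:ℝ)*δ + δ := by ring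
      rw [this] at hmge
      linarith
    have h1le : (1:ℝ) ≤ (g ⟨σ0, hσ0face⟩ x - ε)/ε := by
      rw [le_div_iff₀ hε]
      rw [hεdef]
      linarith
    show max 0 (min 1 ((g ⟨σ0, hσ0face⟩ x - ε)/ε)) = 1
    rw [min_eq_left h1le, max_eq_right zero_le_one]
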